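/- Let K be a field and q ∈ K an element that is not a root of unity. Let M be the K-vector space with basis {v_n : n ∈ ℕ} ∪ {w_n : n ∈ ℕ}. Then there is a (unique) left module structure over the quantized Weyl algebra C(q) on M in which the generators a, b act K-linearly by: a·v_0 = 0, a·v_n = ((qⁿ−1)/(q−1))·v_{n−1} for n ≥ 1, b·v_n = v_{n+1} for all n ≥ 0, a·w_n = qⁿ(w_n + w_{n+1}), and b·w_n = (q^{−n}/(1−q))·w_n + (−1)ⁿ v_0 for all n ≥ 0. -/

import Mathlib

noncomputable section

open FreeAlgebra

/-- Defining relation of the quantized Weyl algebra `C(q)`: `a * b = q • (b * a) + 1`,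
where `ι K 0` plays the role of `a` and `ι K 1` plays the role of `b`. -/
inductive QuantizedWeylRel (K : Type) [Field K] (q : K) :
    FreeAlgebra K (Fin 2) → FreeAlgebra K (Fin 2) → Prop
  | rel : QuantizedWeylRel K q (ι K (0 : Fin 2) * ι K (1 : Fin 2))
      (q • (ι K (1 : Fin 2) * ι K (0 : Fin 2)) + 1)

/-- The quantized Weyl algebra `C(q)`. -/
abbrev QuantizedWeyl (K : Type) [Field K] (q : K) : Type :=
  RingQuot (QuantizedWeylRel K q)

/-- The generator `a` of the quantized Weyl algebra. -/
def QuantizedWeyl.a (K : Type) [Field K] (q : K) : QuantizedWeyl K q :=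
  RingQuot.mkAlgHom K (QuantizedWeylRel K q) (ι K (0 : Fin 2))

/-- The generator `b` of the quantized Weyl algebra. -/
def QuantizedWeyl.b (K : Type) [Field K] (q : K) : QuantizedWeyl K q :=
  RingQuot.mkAlgHom K (QuantizedWeylRel K q) (ι K (1 : Fin 2))

/-- The `K`-vector space with basis `{v_n : n ∈ ℕ} ∪ {w_n : n ∈ ℕ}`. -/
abbrev VWSpace (K : Type) [Field K] : Type := (ℕ ⊕ ℕ) →₀ K

/-- The basis vector `v_n`. -/
def VWSpace.v (K : Type) [Field K] (n : ℕ) : VWSpace K := Finsupp.single (Sum.inl n) 1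

/-- The basis vector `w_n`. -/
def VWSpace.w (K : Type) [Field K] (n : ℕ) : VWSpace K := Finsupp.single (Sum.inr n) 1


section
variable (K : Type) [Field K] (q : K)

def Afun : ℕ ⊕ ℕ → VWSpace K
  | .inl 0 => 0
  | .inl (n+1) => ((q ^ (n + 1) - 1) / (q - 1)) • Finsupp.single (Sum.inl n) 1
  | .inr n => q ^ n • (Finsupp.single (Sum.inr n) 1 + Finsupp.single (Sum.inr (n+1)) 1)

def Bfun : ℕ ⊕ ℕ → VWSpace K
  | .inl n => Finsupp.single (Sum.inl (n+1)) 1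
  | .inr n => ((q ^ n)⁻¹ / (1 - q)) • Finsupp.single (Sum.inr n) 1
      + ((-1 : K) ^ n) • Finsupp.single (Sum.inl 0) 1

def Aend : Module.End K (VWSpace K) :=
  Finsupp.lsum K fun i => LinearMap.toSpanSingleton K _ (Afun K q i)

def Bend : Module.End K (VWSpace K) :=
  Finsupp.lsum K fun i => LinearMap.toSpanSingleton K _ (Bfun K q i)

lemma Aend_single (i : ℕ ⊕ ℕ) (c : K) :
    Aend K q (Finsupp.single i c) = c • Afun K q i := by
  simp [Aend, LinearMap.toSpanSingleton_apply]

lemma Bend_single (i : ℕ ⊕ ℕ) (c : K) :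
    Bend K q (Finsupp.single i c) = c • Bfun K q i := by
  simp [Bend, LinearMap.toSpanSingleton_apply]

lemma key_rel (hq0 : q ≠ 0) (hq1 : q ≠ 1) :
    Aend K q * Bend K q = q • (Bend K q * Aend K q) + 1 := by
  have hq1' : q - 1 ≠ 0 := sub_ne_zero.mpr hq1
  have h1q : 1 - q ≠ 0 := sub_ne_zero.mpr (Ne.symm hq1)
  apply Module.Basis.ext (Finsupp.basisSingleOne (R := K) (ι := ℕ ⊕ ℕ)) (fun i => ?_)
  simp only [Finsupp.coe_basisSingleOne, Module.End.mul_apply, LinearMap.add_apply,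
    LinearMap.smul_apply, Module.End.one_apply]
  rcases i with n | n
  · cases n with
    | zero =>
      simp only [Bfun, Afun, Bend_single, Aend_single, smul_smul, map_smul, smul_zero,
        one_smul, map_zero]
      match_scalars
      field_simp
      ring
    | succ m =>
      simp only [Bfun, Afun, Bend_single, Aend_single, smul_smul, map_smul, smul_zero,
        one_smul, map_zero]
      match_scalars
      field_simp
      ring
  · have hqn : q ^ n ≠ 0 := pow_ne_zero _ hq0
    simp only [Bfun, Afun, Bend_single, Aend_single, smul_smul, map_smul, map_add,
      smul_add, smul_zero, one_smul, map_zero]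
    match_scalars <;> field_simp <;> ring

def ρ₀ : FreeAlgebra K (Fin 2) →ₐ[K] Module.End K (VWSpace K) :=
  FreeAlgebra.lift K ![Aend K q, Bend K q]

lemma ρ₀_rel (hq0 : q ≠ 0) (hq1 : q ≠ 1) {x y : FreeAlgebra K (Fin 2)}
    (h : QuantizedWeylRel K q x y) : ρ₀ K q x = ρ₀ K q y := by
  cases h
  simp only [ρ₀, map_mul, map_add, map_smul, map_one, FreeAlgebra.lift_ι_apply,
    Matrix.cons_val_zero, Matrix.cons_val_one, Matrix.head_cons]
  exact key_rel K q hq0 hq1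

def ρfull (hq0 : q ≠ 0) (hq1 : q ≠ 1) :
    QuantizedWeyl K q →ₐ[K] Module.End K (VWSpace K) :=
  RingQuot.liftAlgHom K ⟨ρ₀ K q, fun {_ _} h => ρ₀_rel K q hq0 hq1 h⟩

lemma ρfull_a (hq0 : q ≠ 0) (hq1 : q ≠ 1) :
    ρfull K q hq0 hq1 (QuantizedWeyl.a K q) = Aend K q := by
  rw [QuantizedWeyl.a, ρfull, RingQuot.liftAlgHom_mkAlgHom_apply]
  simp [ρ₀]

lemma ρfull_b (hq0 : q ≠ 0) (hq1 : q ≠ 1) :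
    ρfull K q hq0 hq1 (QuantizedWeyl.b K q) = Bend K q := by
  rw [QuantizedWeyl.b, ρfull, RingQuot.liftAlgHom_mkAlgHom_apply]
  simp [ρ₀]

end

/-- For `q` not a root of unity, there is a unique left `C(q)`-module structure on the
`K`-vector space `M` with basis `{v_n} ∪ {w_n}` — i.e. a unique `K`-algebra
homomorphism `ρ : C(q) → End_K(M)` — in which the generators `a`, `b` act `K`-linearly
by `a·v_0 = 0`, `a·v_n = ((qⁿ-1)/(q-1))·v_{n-1}` for `n ≥ 1`, `b·v_n = v_{n+1}`,
`a·w_n = qⁿ(w_n + w_{n+1})` and `b·w_n = (q⁻ⁿ/(1-q))·w_n + (-1)ⁿ·v_0`. -/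
theorem quantizedWeyl_module_structure (K : Type) [Field K] (q : K) (hq0 : q ≠ 0)
    (hq : ∀ k : ℕ, 0 < k → q ^ k ≠ 1) :
    ∃! ρ : QuantizedWeyl K q →ₐ[K] Module.End K (VWSpace K),
      ρ (QuantizedWeyl.a K q) (VWSpace.v K 0) = 0 ∧
      (∀ n : ℕ, ρ (QuantizedWeyl.a K q) (VWSpace.v K (n + 1)) =
        ((q ^ (n + 1) - 1) / (q - 1)) • VWSpace.v K n) ∧
      (∀ n : ℕ, ρ (QuantizedWeyl.b K q) (VWSpace.v K n) = VWSpace.v K (n + 1)) ∧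
      (∀ n : ℕ, ρ (QuantizedWeyl.a K q) (VWSpace.w K n) =
        q ^ n • (VWSpace.w K n + VWSpace.w K (n + 1))) ∧
      (∀ n : ℕ, ρ (QuantizedWeyl.b K q) (VWSpace.w K n) =
        ((q ^ n)⁻¹ / (1 - q)) • VWSpace.w K n + ((-1 : K) ^ n) • VWSpace.v K 0) := by
  have hq1 : q ≠ 1 := by have := hq 1 one_pos; simpa using this
  refine ⟨ρfull K q hq0 hq1, ⟨?_, ?_, ?_, ?_, ?_⟩, ?_⟩
  · rw [ρfull_a]; simp [VWSpace.v, Aend_single, Afun]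
  · intro n; rw [ρfull_a]; simp [VWSpace.v, Aend_single, Afun]
  · intro n; rw [ρfull_b]; simp [VWSpace.v, Bend_single, Bfun]
  · intro n; rw [ρfull_a]; simp [VWSpace.v, VWSpace.w, Aend_single, Afun]
  · intro n; rw [ρfull_b]; simp [VWSpace.v, VWSpace.w, Bend_single, Bfun]
  · rintro ρ' ⟨h0, h1, h2, h3, h4⟩
    have ha : ρ' (QuantizedWeyl.a K q) = Aend K q := by
      apply Module.Basis.ext (Finsupp.basisSingleOne (R := K) (ι := ℕ ⊕ ℕ)) (fun i => ?_)
      rcases i with n | n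
      · cases n with
        | zero => simpa [VWSpace.v, Aend_single, Afun] using h0
        | succ m =>
          simpa [VWSpace.v, Aend_single, Afun] using h1 m
      · simpa [VWSpace.w, Aend_single, Afun] using h3 n
    have hb : ρ' (QuantizedWeyl.b K q) = Bend K q := by
      apply Module.Basis.ext (Finsupp.basisSingleOne (R := K) (ι := ℕ ⊕ ℕ)) (fun i => ?_)
      rcases i with n | n
      · simpa [VWSpace.v, Bend_single, Bfun] using h2 n
      · simpa [VWSpace.v, VWSpace.w, Bend_single, Bfun] using h4 n
    apply RingQuot.ringQuot_ext'
    apply FreeAlgebra.hom_ext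
    funext i
    fin_cases i
    · simpa [QuantizedWeyl.a] using ha.trans (ρfull_a K q hq0 hq1).symm
    · simpa [QuantizedWeyl.b] using hb.trans (ρfull_b K q hq0 hq1).symm


end
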